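/- arXiv:2202.12102 — 2 statements merged into one kernel-verified Lean document; each statement's English description precedes it below -/
import Mathlib

section
/- The assignments (D r) ⊗ s ↦ 1 ⊗ D(r·s) − r ⊗ (D s) and r ⊗ (D s) ↦ D(r·s) ⊗ 1 − (D r) ⊗ s induce well-defined k-linear maps γ̃ : (R ⧸ k·1) ⊗[k] R → R ⊗[k] (R ⧸ k·1) and χ̃ : R ⊗[k] (R ⧸ k·1) → (R ⧸ k·1) ⊗[k] R respectively, and these two maps are mutually inverse bijections: χ̃ ∘ γ̃ = id and γ̃ ∘ χ̃ = id. -/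
open TensorProduct

section aux

variable (k : Type*) [Field k] (R : Type*) [Ring R] [Algebra k R]

noncomputable abbrev Rbar := R ⧸ Submodule.span k {(1 : R)}

noncomputable def Bγ : R →ₗ[k] R →ₗ[k] R ⊗[k] Rbar k R :=
  LinearMap.mk₂ k
    (fun r s => (1 : R) ⊗ₜ[k] (Submodule.Quotient.mk (r * s)) - r ⊗ₜ[k] (Submodule.Quotient.mk s))
    (by intro r r' s; simp [add_mul, Submodule.Quotient.mk_add, tmul_add, add_tmul]; abel)
    (by intro c r s; simp [smul_mul_assoc, Submodule.Quotient.mk_smul, tmul_smul, smul_tmul',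
          smul_sub])
    (by intro r s s'; simp [mul_add, Submodule.Quotient.mk_add, tmul_add]; abel)
    (by intro c r s; simp [mul_smul_comm, Submodule.Quotient.mk_smul, tmul_smul, smul_sub])

noncomputable def Bχ : R →ₗ[k] R →ₗ[k] Rbar k R ⊗[k] R :=
  LinearMap.mk₂ k
    (fun s r => (Submodule.Quotient.mk (r * s)) ⊗ₜ[k] (1 : R) - (Submodule.Quotient.mk r) ⊗ₜ[k] s)
    (by intro s s' r; simp [mul_add, Submodule.Quotient.mk_add, add_tmul, tmul_add]; abel)
    (by intro c s r; simp [mul_smul_comm, Submodule.Quotient.mk_smul, smul_tmul', tmul_smul,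
          smul_sub])
    (by intro s r r'; simp [add_mul, Submodule.Quotient.mk_add, add_tmul]; abel)
    (by intro c s r; simp [smul_mul_assoc, Submodule.Quotient.mk_smul, smul_tmul', tmul_smul,
          smul_sub])

lemma mk_one_eq_zero : (Submodule.Quotient.mk (1 : R) : Rbar k R) = 0 :=
  (Submodule.Quotient.mk_eq_zero _).2 (Submodule.mem_span_singleton_self _)

lemma Bγ_ker : Submodule.span k {(1 : R)} ≤ LinearMap.ker (Bγ k R) := by
  rw [Submodule.span_le, Set.singleton_subset_iff]
  ext s
  simp [Bγ]

lemma Bχ_ker : Submodule.span k {(1 : R)} ≤ LinearMap.ker (Bχ k R) := by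
  rw [Submodule.span_le, Set.singleton_subset_iff]
  ext r
  simp [Bχ]

end aux

/-- The assignments `(D r) ⊗ s ↦ 1 ⊗ D(r·s) − r ⊗ (D s)` and
`r ⊗ (D s) ↦ D(r·s) ⊗ 1 − (D r) ⊗ s` induce well-defined `k`-linear maps
`γ̃ : (R ⧸ k·1) ⊗[k] R → R ⊗[k] (R ⧸ k·1)` and `χ̃ : R ⊗[k] (R ⧸ k·1) → (R ⧸ k·1) ⊗[k] R`,
and these maps are mutually inverse bijections. -/
theorem stmt_6 (k : Type*) [Field k] (R : Type*) [Ring R] [Algebra k R] :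
    ∃ γ : (R ⧸ Submodule.span k {(1 : R)}) ⊗[k] R →ₗ[k]
            R ⊗[k] (R ⧸ Submodule.span k {(1 : R)}),
    ∃ χ : R ⊗[k] (R ⧸ Submodule.span k {(1 : R)}) →ₗ[k]
            (R ⧸ Submodule.span k {(1 : R)}) ⊗[k] R,
      (∀ r s : R,
        γ ((Submodule.Quotient.mk r : R ⧸ Submodule.span k {(1 : R)}) ⊗ₜ[k] s)
          = (1 : R) ⊗ₜ[k] (Submodule.Quotient.mk (r * s) : R ⧸ Submodule.span k {(1 : R)})
            - r ⊗ₜ[k] (Submodule.Quotient.mk s : R ⧸ Submodule.span k {(1 : R)})) ∧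
      (∀ r s : R,
        χ (r ⊗ₜ[k] (Submodule.Quotient.mk s : R ⧸ Submodule.span k {(1 : R)}))
          = (Submodule.Quotient.mk (r * s) : R ⧸ Submodule.span k {(1 : R)}) ⊗ₜ[k] (1 : R)
            - (Submodule.Quotient.mk r : R ⧸ Submodule.span k {(1 : R)}) ⊗ₜ[k] s) ∧
      χ ∘ₗ γ = LinearMap.id ∧ γ ∘ₗ χ = LinearMap.id := by
  set γ : (R ⧸ Submodule.span k {(1 : R)}) ⊗[k] R →ₗ[k]
      R ⊗[k] (R ⧸ Submodule.span k {(1 : R)}) :=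
    TensorProduct.lift (Submodule.liftQ (R := k) (M := R) (R₂ := k) (M₂ := R →ₗ[k] R ⊗[k] Rbar k R)
      (τ₁₂ := RingHom.id k) _ (Bγ k R) (Bγ_ker k R)) with hγ
  set χ : R ⊗[k] (R ⧸ Submodule.span k {(1 : R)}) →ₗ[k]
      (R ⧸ Submodule.span k {(1 : R)}) ⊗[k] R :=
    (TensorProduct.lift (Submodule.liftQ (R := k) (M := R) (R₂ := k) (M₂ := R →ₗ[k] Rbar k R ⊗[k] R)
      (τ₁₂ := RingHom.id k) _ (Bχ k R) (Bχ_ker k R))) ∘ₗ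
      (TensorProduct.comm k R (R ⧸ Submodule.span k {(1 : R)})).toLinearMap with hχ
  have hγapp : ∀ r s : R,
      γ ((Submodule.Quotient.mk r : R ⧸ Submodule.span k {(1 : R)}) ⊗ₜ[k] s)
        = (1 : R) ⊗ₜ[k] (Submodule.Quotient.mk (r * s)) - r ⊗ₜ[k] (Submodule.Quotient.mk s) := by
    intro r s; simp [hγ, Bγ]
  have hχapp : ∀ r s : R,
      χ (r ⊗ₜ[k] (Submodule.Quotient.mk s : R ⧸ Submodule.span k {(1 : R)}))
        = (Submodule.Quotient.mk (r * s)) ⊗ₜ[k] (1 : R) - (Submodule.Quotient.mk r) ⊗ₜ[k] s := by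
    intro r s; simp [hχ, Bχ]
  refine ⟨γ, χ, hγapp, hχapp, ?_, ?_⟩
  · apply TensorProduct.ext'
    intro x s
    obtain ⟨r, rfl⟩ := Submodule.Quotient.mk_surjective _ x
    simp [hγapp, hχapp, mk_one_eq_zero k R]
  · apply TensorProduct.ext'
    intro r x
    obtain ⟨s, rfl⟩ := Submodule.Quotient.mk_surjective _ x
    simp [hγapp, hχapp, mk_one_eq_zero k R]
end

section
/- Let End₀(R) := {A ∈ End_k(R) : A(1) = 0}. For A ∈ End₀(R) and r ∈ R define r ⊙ A ∈ End_k(R) by (r ⊙ A)(s) := A(s·r) − s·A(r), and for r' ∈ R define A·r' by (A·r')(s) := A(s)·r'. Then: (1) (r ⊙ A)(1) = 0 and (A·r')(1) = 0, so both operations preserve End₀(R); (2) 1 ⊙ A = A and (r·r') ⊙ A = r ⊙ (r' ⊙ A), so ⊙ is a left R-action; (3) r ⊙ (A·r') = (r ⊙ A)·r', so the left and right actions commute. Hence End₀(R) is an (R,R)-bimodule under these operations. -/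
/-- On `End₀(R) = {A ∈ End_k(R) : A 1 = 0}`, the operations
`(r ⊙ A)(s) = A(s·r) − s·A(r)` and `(A·r')(s) = A(s)·r'` preserve `End₀(R)`,
`⊙` is a left `R`-action (`1 ⊙ A = A`, `(r·r') ⊙ A = r ⊙ (r' ⊙ A)`), and the two
actions commute, making `End₀(R)` an `(R,R)`-bimodule. -/
theorem stmt_16 (k : Type*) [Field k] (R : Type*) [Ring R] [Algebra k R]
    (odot : R → (R →ₗ[k] R) → (R →ₗ[k] R))
    (hodot : ∀ (r : R) (A : R →ₗ[k] R) (s : R), odot r A s = A (s * r) - s * A r)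
    (rsm : (R →ₗ[k] R) → R → (R →ₗ[k] R))
    (hrsm : ∀ (A : R →ₗ[k] R) (r' s : R), rsm A r' s = A s * r') :
    (∀ A : R →ₗ[k] R, A 1 = 0 → (∀ r : R, odot r A 1 = 0) ∧ (∀ r' : R, rsm A r' 1 = 0)) ∧
    (∀ A : R →ₗ[k] R, A 1 = 0 → odot 1 A = A) ∧
    (∀ A : R →ₗ[k] R, A 1 = 0 → ∀ r r' : R, odot (r * r') A = odot r (odot r' A)) ∧
    (∀ A : R →ₗ[k] R, A 1 = 0 → ∀ r r' : R, odot r (rsm A r') = rsm (odot r A) r') := by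
  refine ⟨fun A hA => ⟨fun r => by simp [hodot], fun r' => by simp [hrsm, hA]⟩,
    fun A hA => ?_, fun A hA r r' => ?_, fun A hA r r' => ?_⟩
  · ext s; simp [hodot, hA]
  · ext s; simp [hodot, mul_sub, mul_assoc]
  · ext s; simp [hodot, hrsm, sub_mul, mul_assoc]
end
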